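/- Under the same hypotheses as the upper-expectation Hoeffding inequality (bounded X_i with range ≤ B_i, factorization of upper expectations over nonnegative products), for any ε > 0 the upper probability satisfies P̄(Σ_{i=1}^n (X_i − E̲[X_i]) ≤ −ε) ≤ exp(−2ε²/γ_n), where E̲[X] = inf_{P∈K} E_P[X]. -/

import Mathlib

open MeasureTheory Real


lemma hoeff_log_aux {p : ℝ} (hp0 : 0 ≤ p) (hp1 : p ≤ 1) (h : ℝ) :
    1 - p + p * exp h ≤ exp (h ^ 2 / 8 + p * h) := by
  have hd : ∀ x : ℝ, 0 < 1 - p + p * exp x := by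
    intro x
    rcases eq_or_lt_of_le hp0 with h0 | h0
    · simp [← h0]
    · nlinarith [exp_pos x, mul_pos h0 (exp_pos x)]
  set g : ℝ → ℝ := fun x => x ^ 2 / 8 + p * x - Real.log (1 - p + p * exp x) with hg
  set g1 : ℝ → ℝ := fun x => x / 4 + p - p * exp x / (1 - p + p * exp x) with hg1
  have hder : ∀ x, HasDerivAt g (g1 x) x := by
    intro x
    have h1 : HasDerivAt (fun x : ℝ => 1 - p + p * exp x) (p * exp x) x :=
      ((Real.hasDerivAt_exp x).const_mul p).const_add (1 - p)
    have h2 : HasDerivAt (fun x : ℝ => Real.log (1 - p + p * exp x))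
        (p * exp x / (1 - p + p * exp x)) x := h1.log (ne_of_gt (hd x))
    have h3 : HasDerivAt (fun x : ℝ => x ^ 2 / 8 + p * x) (x / 4 + p) x := by
      have := ((hasDerivAt_pow 2 x).div_const 8).add ((hasDerivAt_id x).const_mul p)
      convert this using 1
      · rfl
      · rfl
      · rfl
      · simp; ring
    exact h3.sub h2
  have hder1 : ∀ x, HasDerivAt g1
      (1 / 4 - (p * exp x * (1 - p + p * exp x) - p * exp x * (p * exp x)) /
        (1 - p + p * exp x) ^ 2) x := by
    intro x
    have h1 : HasDerivAt (fun x : ℝ => 1 - p + p * exp x) (p * exp x) x :=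
      ((Real.hasDerivAt_exp x).const_mul p).const_add (1 - p)
    have h2 : HasDerivAt (fun x : ℝ => p * exp x) (p * exp x) x :=
      (Real.hasDerivAt_exp x).const_mul p
    have h4 := h2.div h1 (ne_of_gt (hd x))
    have h3 : HasDerivAt (fun x : ℝ => x / 4 + p) (1 / 4) x := by
      simpa using ((hasDerivAt_id x).div_const 4).add_const p
    exact h3.sub h4
  have hder1nn : ∀ x, 0 ≤ 1 / 4 - (p * exp x * (1 - p + p * exp x) - p * exp x * (p * exp x)) /
      (1 - p + p * exp x) ^ 2 := by
    intro x
    rw [sub_nonneg, div_le_iff₀ (pow_pos (hd x) 2)]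
    nlinarith [sq_nonneg (1 - p - p * exp x), exp_pos x]
  have hg1mono : Monotone g1 :=
    monotone_of_deriv_nonneg (fun x => (hder1 x).differentiableAt)
      (fun x => by rw [(hder1 x).deriv]; exact hder1nn x)
  have hg10 : g1 0 = 0 := by
    simp [hg1]
  have hgcont : Continuous g := by
    have : Differentiable ℝ g := fun x => (hder x).differentiableAt
    exact this.continuous
  have hg0 : g 0 = 0 := by simp [hg]
  have key : ∀ x, 0 ≤ g x := by
    intro x
    rcases le_total 0 x with hx | hx
    · have hmono : MonotoneOn g (Set.Ici (0:ℝ)) := by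
        apply monotoneOn_of_deriv_nonneg (convex_Ici 0) hgcont.continuousOn
          (fun y _ => (hder y).differentiableAt.differentiableWithinAt)
        intro y hy
        rw [(hder y).deriv]
        rw [interior_Ici] at hy
        have := hg1mono (le_of_lt hy)
        rw [hg10] at this; exact this
      have := hmono Set.self_mem_Ici (Set.mem_Ici.2 hx) hx
      rw [hg0] at this; exact this
    · have hmono : AntitoneOn g (Set.Iic (0:ℝ)) := by
        apply antitoneOn_of_deriv_nonpos (convex_Iic 0) hgcont.continuousOn
          (fun y _ => (hder y).differentiableAt.differentiableWithinAt)
        intro y hy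
        rw [(hder y).deriv]
        rw [interior_Iic] at hy
        have := hg1mono (le_of_lt hy)
        rw [hg10] at this; exact this
      have := hmono (Set.mem_Iic.2 hx) Set.self_mem_Iic hx
      rw [hg0] at this; exact this
  have := key h
  have hlog : Real.log (1 - p + p * exp h) ≤ h ^ 2 / 8 + p * h := by
    simp only [hg] at this; linarith
  calc 1 - p + p * exp h = exp (Real.log (1 - p + p * exp h)) := (exp_log (hd h)).symm
    _ ≤ exp (h ^ 2 / 8 + p * h) := exp_le_exp.2 hlog

lemma hoeff_scalar {p : ℝ} (hp0 : 0 ≤ p) (hp1 : p ≤ 1) (h : ℝ) :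
    (1 - p) * exp (-(p * h)) + p * exp ((1 - p) * h) ≤ exp (h ^ 2 / 8) := by
  have e1 : exp ((1 - p) * h) = exp h * exp (-(p * h)) := by
    rw [← exp_add]; ring_nf
  have e2 : exp (h ^ 2 / 8 + p * h) * exp (-(p * h)) = exp (h ^ 2 / 8) := by
    rw [← exp_add]; ring_nf
  have := mul_le_mul_of_nonneg_right (hoeff_log_aux hp0 hp1 h) (exp_nonneg (-(p * h)))
  rw [e2] at this
  rw [e1]
  nlinarith [exp_pos (-(p*h))]

lemma integrable_of_bdd {Ω : Type*} [MeasurableSpace Ω] (P : Measure Ω) [IsFiniteMeasure P]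
    {g : Ω → ℝ} (hg : Measurable g) (C : ℝ) (hb : ∀ ω, |g ω| ≤ C) : Integrable g P :=
  Integrable.mono' (integrable_const C) hg.aestronglyMeasurable
    (Filter.Eventually.of_forall hb)

lemma hoeffding_lem {Ω : Type*} [MeasurableSpace Ω] (P : Measure Ω) [IsProbabilityMeasure P]
    {X : Ω → ℝ} (hX : Measurable X) {a b : ℝ} (hab : a ≤ b)
    (hbd : ∀ ω, X ω ∈ Set.Icc a b) (t : ℝ) :
    ∫ ω, Real.exp (t * (X ω - ∫ ω', X ω' ∂P)) ∂P ≤ Real.exp (t ^ 2 * (b - a) ^ 2 / 8) := by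
  have hXint : Integrable X P :=
    integrable_of_bdd P hX (max |a| |b|) (fun ω => by
      rcases hbd ω with ⟨h1, h2⟩
      rw [abs_le]
      constructor
      · have := neg_abs_le a; have := le_max_left |a| |b|; linarith
      · have := le_abs_self b; have := le_max_right |a| |b|; linarith)
  set μ := ∫ ω', X ω' ∂P with hμ
  have hμa : a ≤ μ := by
    calc a = ∫ _ω', a ∂P := by simp
      _ ≤ μ := integral_mono (integrable_const a) hXint (fun ω => (hbd ω).1)
  have hμb : μ ≤ b := by
    calc μ ≤ ∫ _ω', b ∂P := integral_mono hXint (integrable_const b) (fun ω => (hbd ω).2)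
      _ = b := by simp
  rcases eq_or_lt_of_le hab with heq | hlt
  · have hXconst : ∀ ω, X ω = a := fun ω => le_antisymm (heq ▸ (hbd ω).2) (hbd ω).1
    have : μ = a := le_antisymm (heq ▸ hμb) hμa
    simp only [hXconst, this, sub_self, mul_zero, exp_zero]
    rw [integral_const]; simp [exp_nonneg]
    positivity
  · set Bl := b - a with hBl
    have hBpos : 0 < Bl := by simp [hBl]; linarith
    set p := (μ - a) / Bl with hp
    have hp0 : 0 ≤ p := div_nonneg (by linarith) hBpos.le
    have hp1 : p ≤ 1 := by rw [div_le_one hBpos]; linarith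
    set h := t * Bl with hh
    -- pointwise convexity bound
    have hpt : ∀ ω, exp (t * (X ω - μ)) ≤
        ((b - X ω) / Bl) * exp (t * (a - μ)) + ((X ω - a) / Bl) * exp (t * (b - μ)) := by
      intro ω
      rcases hbd ω with ⟨h1, h2⟩
      have l1 : 0 ≤ (b - X ω) / Bl := div_nonneg (by linarith) hBpos.le
      have l2 : 0 ≤ (X ω - a) / Bl := div_nonneg (by linarith) hBpos.le
      have lsum : (b - X ω) / Bl + (X ω - a) / Bl = 1 := by
        field_simp
        rw [hBl]; ring
      have hcx := convexOn_exp.2 (Set.mem_univ (t * (a - μ))) (Set.mem_univ (t * (b - μ)))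
        l1 l2 lsum
      simp only [smul_eq_mul] at hcx
      have hBne : Bl ≠ 0 := ne_of_gt hBpos
      have harg : t * (X ω - μ)
          = (b - X ω) / Bl * (t * (a - μ)) + (X ω - a) / Bl * (t * (b - μ)) := by
        field_simp
        ring
      rw [← harg] at hcx
      exact hcx
    set c1 := exp (t * (a - μ)) / Bl with hc1
    set c2 := exp (t * (b - μ)) / Bl with hc2
    have hrw : (fun ω => ((b - X ω) / Bl) * exp (t * (a - μ)) + ((X ω - a) / Bl) * exp (t * (b - μ)))
        = fun ω => (c1 * b - c2 * a) + (c2 - c1) * X ω := by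
      funext ω; simp only [hc1, hc2]; field_simp; ring
    have hint1 : Integrable (fun ω => exp (t * (X ω - μ))) P := by
      apply integrable_of_bdd P (by measurability) (exp (|t| * Bl))
      intro ω
      rw [abs_of_nonneg (exp_nonneg _), exp_le_exp]
      rcases hbd ω with ⟨h1, h2⟩
      calc t * (X ω - μ) ≤ |t * (X ω - μ)| := le_abs_self _
        _ = |t| * |X ω - μ| := abs_mul _ _
        _ ≤ |t| * Bl := by
            apply mul_le_mul_of_nonneg_left _ (abs_nonneg t)
            rw [abs_le]; constructor <;> simp [hBl] <;> linarith
    have hint2 : Integrable (fun ω => (c1 * b - c2 * a) + (c2 - c1) * X ω) P :=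
      (integrable_const _).add (hXint.const_mul _)
    have step1 : ∫ ω, exp (t * (X ω - μ)) ∂P ≤ (c1 * b - c2 * a) + (c2 - c1) * μ := by
      calc ∫ ω, exp (t * (X ω - μ)) ∂P
          ≤ ∫ ω, ((c1 * b - c2 * a) + (c2 - c1) * X ω) ∂P := by
            apply integral_mono hint1 hint2
            intro ω
            have h1 := hpt ω
            have h2 : (b - X ω) / Bl * rexp (t * (a - μ)) + (X ω - a) / Bl * rexp (t * (b - μ))
                = c1 * b - c2 * a + (c2 - c1) * X ω := by
              have hBne : Bl ≠ 0 := ne_of_gt hBpos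
              simp only [hc1, hc2]
              field_simp
              ring
            simp only [h2] at h1
            exact h1
        _ = (c1 * b - c2 * a) + (c2 - c1) * μ := by
            rw [integral_add (integrable_const _) (hXint.const_mul _), integral_const,
              integral_const_mul]
            simp [hμ]
    have step2 : (c1 * b - c2 * a) + (c2 - c1) * μ
        = (1 - p) * exp (-(p * h)) + p * exp ((1 - p) * h) := by
      have e1 : t * (a - μ) = -(p * h) := by
        simp only [hp, hh]; field_simp; ring
      have e2 : t * (b - μ) = (1 - p) * h := by
        simp only [hp, hh]; field_simp; ring
      have hBne : Bl ≠ 0 := ne_of_gt hBpos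
      rw [← e1, ← e2]
      simp only [hc1, hc2, hp]
      field_simp
      ring
    have step3 := hoeff_scalar hp0 hp1 h
    have hfin : h ^ 2 / 8 = t ^ 2 * (b - a) ^ 2 / 8 := by
      simp only [hh, hBl]; ring
    rw [hfin] at step3
    linarith [step1, step2.symm ▸ step3]

/-- Hoeffding-type inequality for upper expectations: if bounded variables `X_1, …, X_n`
(with range of `X_i` of length at most `B_i`) satisfy the factorization property
`Ē[∏ f_i(X_i)] ≤ ∏ Ē[f_i(X_i)]` for bounded nonnegative `f_i`, then for `γ_n = Σ B_i² > 0`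
and `ε > 0`, `P̄(Σ (X_i - E̲[X_i]) ≤ -ε) ≤ exp (-2ε²/γ_n)`. -/
theorem upper_hoeffding_lower_tail {Ω : Type*} [MeasurableSpace Ω]
    (K : Set (Measure Ω)) (hK : K.Nonempty) (hKp : ∀ P ∈ K, IsProbabilityMeasure P)
    (n : ℕ) (hn : 0 < n) (X : ℕ → Ω → ℝ) (hmeas : ∀ i, Measurable (X i))
    (B : ℕ → ℝ)
    (hrange : ∀ i ∈ Finset.Icc 1 n, ∀ ω ω', X i ω - X i ω' ≤ B i)
    (hfact : ∀ f : ℕ → ℝ → ℝ,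
      (∀ i x, 0 ≤ f i x) → (∀ i, ∃ C, ∀ x, f i x ≤ C) → (∀ i, Measurable (f i)) →
      (⨆ P ∈ K, ∫ ω, ∏ i ∈ Finset.Icc 1 n, f i (X i ω) ∂P) ≤
        ∏ i ∈ Finset.Icc 1 n, ⨆ P ∈ K, ∫ ω, f i (X i ω) ∂P)
    (γ : ℝ) (hγ : γ = ∑ i ∈ Finset.Icc 1 n, (B i) ^ 2) (hγpos : 0 < γ)
    (ε : ℝ) (hε : 0 < ε) :
    (⨆ P ∈ K,
        (P {ω | ∑ i ∈ Finset.Icc 1 n, (X i ω - ⨅ Q ∈ K, ∫ ω', X i ω' ∂Q) ≤ -ε}).toReal) ≤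
      Real.exp (-2 * ε ^ 2 / γ) := by
  classical
  obtain ⟨P0, hP0⟩ := hK
  haveI hP0p := hKp P0 hP0
  have hΩ : Nonempty Ω := by
    by_contra hemp
    rw [not_nonempty_iff] at hemp
    have h1 : P0 Set.univ = 1 := measure_univ
    rw [Set.univ_eq_empty_iff.mpr hemp] at h1
    simp at h1
  haveI := hΩ
  obtain ⟨ω0⟩ := id hΩ
  set I := Finset.Icc 1 n with hI
  let m : ℕ → ℝ := fun i => ⨅ Q ∈ K, ∫ ω', X i ω' ∂Q
  have hmdef : ∀ i, (⨅ Q ∈ K, ∫ ω', X i ω' ∂Q) = m i := fun _ => rfl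
  simp only [hmdef]
  let c : ℕ → ℝ := fun i => sInf (Set.range (X i))
  have hBnn : ∀ i ∈ I, 0 ≤ B i := fun i hi => by
    have := hrange i hi ω0 ω0; linarith
  have hbddb : ∀ i ∈ I, BddBelow (Set.range (X i)) := fun i hi =>
    ⟨X i ω0 - B i, by rintro y ⟨ω', rfl⟩; have := hrange i hi ω0 ω'; linarith⟩
  have hcle : ∀ i ∈ I, ∀ ω, c i ≤ X i ω := fun i hi ω =>
    csInf_le (hbddb i hi) (Set.mem_range_self ω)
  have hleb : ∀ i ∈ I, ∀ ω, X i ω ≤ c i + B i := by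
    intro i hi ω
    have h1 : X i ω - B i ≤ c i := le_csInf (Set.range_nonempty _)
      (by rintro y ⟨ω', rfl⟩; have := hrange i hi ω ω'; linarith)
    linarith
  have hXint : ∀ P ∈ K, ∀ i ∈ I, Integrable (X i) P := by
    intro P hP i hi
    haveI := hKp P hP
    exact integrable_of_bdd P (hmeas i) (max |c i| |c i + B i|) (fun ω => by
      have h1 := hcle i hi ω; have h2 := hleb i hi ω
      rw [abs_le]
      constructor
      · have h3 := neg_abs_le (c i); have h4 := le_max_left |c i| |c i + B i|; linarith
      · have h3 := le_abs_self (c i + B i); have h4 := le_max_right |c i| |c i + B i|; linarith)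
  have hclei : ∀ P ∈ K, ∀ i ∈ I, c i ≤ ∫ ω', X i ω' ∂P := by
    intro P hP i hi
    haveI := hKp P hP
    calc c i = ∫ _ω', c i ∂P := by simp
      _ ≤ _ := integral_mono (integrable_const _) (hXint P hP i hi) (hcle i hi)
  have hmle : ∀ P ∈ K, ∀ i ∈ I, m i ≤ ∫ ω', X i ω' ∂P := by
    intro P hP i hi
    have hbdd : BddBelow (Set.range fun Q => ⨅ _ : Q ∈ K, ∫ ω', X i ω' ∂Q) := by
      refine ⟨min (c i) 0, ?_⟩
      rintro y ⟨Q, rfl⟩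
      dsimp only
      by_cases hQ : Q ∈ K
      · rw [ciInf_pos hQ]
        exact le_trans (min_le_left _ _) (hclei Q hQ i hi)
      · haveI : IsEmpty (Q ∈ K) := ⟨hQ⟩
        rw [Real.iInf_of_isEmpty]
        exact min_le_right _ _
    calc m i ≤ ⨅ _ : P ∈ K, ∫ ω', X i ω' ∂P := ciInf_le hbdd P
      _ = ∫ ω', X i ω' ∂P := ciInf_pos hP
  -- the exponential tilt
  set l := 4 * ε / γ with hl
  have hlpos : 0 < l := by positivity
  let f : ℕ → ℝ → ℝ := fun i x => Real.exp (-l * (max x (c i) - m i))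
  have hfnn : ∀ i x, 0 ≤ f i x := fun i x => exp_nonneg _
  have hfbd : ∀ i, ∃ C, ∀ x, f i x ≤ C := by
    intro i
    refine ⟨Real.exp (-l * (c i - m i)), fun x => ?_⟩
    apply exp_le_exp.2
    have := le_max_right x (c i)
    nlinarith
  have hfmeas : ∀ i, Measurable (f i) := by
    intro i
    apply Measurable.exp
    exact (measurable_const.mul ((measurable_id.max measurable_const).sub measurable_const))
  have keyf : ∀ i ∈ I, ∀ ω, f i (X i ω) = Real.exp (-l * (X i ω - m i)) := by
    intro i hi ω
    simp only [f]
    rw [max_eq_left (hcle i hi ω)]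
  -- the sum and its pointwise product identity
  set S : Ω → ℝ := fun ω => ∑ i ∈ I, (X i ω - m i) with hS
  have hSmeas : Measurable S := by
    apply Finset.measurable_sum
    exact fun i _ => (hmeas i).sub measurable_const
  have hprod : ∀ ω, ∏ i ∈ I, f i (X i ω) = Real.exp (-l * S ω) := by
    intro ω
    rw [Finset.prod_congr rfl (fun i hi => keyf i hi ω), ← Real.exp_sum, ← Finset.mul_sum]
  set Cg := Real.exp (-l * ∑ i ∈ I, (c i - m i)) with hCg
  have hSlb : ∀ ω, ∑ i ∈ I, (c i - m i) ≤ S ω := fun ω =>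
    Finset.sum_le_sum fun i hi => by have := hcle i hi ω; linarith
  have hprodle : ∀ ω, Real.exp (-l * S ω) ≤ Cg := fun ω => by
    apply exp_le_exp.2
    have := hSlb ω
    nlinarith
  have hintS : ∀ P : Measure Ω, IsProbabilityMeasure P →
      Integrable (fun ω => Real.exp (-l * S ω)) P := by
    intro P hPp
    haveI := hPp
    apply integrable_of_bdd P (Measurable.exp (measurable_const.mul hSmeas)) Cg
    intro ω
    rw [abs_of_nonneg (exp_nonneg _)]
    exact hprodle ω
  have hA : MeasurableSet {ω | S ω ≤ -ε} := measurableSet_le hSmeas measurable_const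
  -- step 1 : per-measure Chernoff bound
  have step1 : ∀ P ∈ K, (P {ω | S ω ≤ -ε}).toReal ≤
      Real.exp (-(l * ε)) * ∫ ω, ∏ i ∈ I, f i (X i ω) ∂P := by
    intro P hP
    haveI := hKp P hP
    have hind : ∀ ω, Set.indicator {ω | S ω ≤ -ε} (fun _ => Real.exp (l * ε)) ω ≤
        Real.exp (-l * S ω) := by
      intro ω
      by_cases hω : ω ∈ {ω | S ω ≤ -ε}
      · rw [Set.indicator_of_mem hω]
        apply exp_le_exp.2
        have : S ω ≤ -ε := hω
        nlinarith
      · rw [Set.indicator_of_notMem hω]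
        exact exp_nonneg _
    have h2 : Real.exp (l * ε) * (P {ω | S ω ≤ -ε}).toReal ≤
        ∫ ω, Real.exp (-l * S ω) ∂P := by
      have h3 := integral_mono ((integrable_const (Real.exp (l * ε))).indicator hA)
        (hintS P (hKp P hP)) hind
      rwa [integral_indicator_const _ hA, smul_eq_mul, mul_comm] at h3
    have h4 : (P {ω | S ω ≤ -ε}).toReal ≤
        Real.exp (-(l * ε)) * ∫ ω, Real.exp (-l * S ω) ∂P := by
      have h5 := mul_le_mul_of_nonneg_left h2 (exp_nonneg (-(l * ε)))
      rw [← mul_assoc, ← Real.exp_add] at h5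
      simpa using h5
    calc (P {ω | S ω ≤ -ε}).toReal ≤ Real.exp (-(l * ε)) * ∫ ω, Real.exp (-l * S ω) ∂P := h4
      _ = Real.exp (-(l * ε)) * ∫ ω, ∏ i ∈ I, f i (X i ω) ∂P := by
          congr 1
          exact integral_congr_ae (Filter.Eventually.of_forall fun ω => (hprod ω).symm)
  -- step 2 : the supremum over K of the product integrals is ≤ ∏ sup of factors
  have hintProd : ∀ P ∈ K, ∫ ω, ∏ i ∈ I, f i (X i ω) ∂P ≤
      ⨆ Q ∈ K, ∫ ω, ∏ i ∈ I, f i (X i ω) ∂Q := by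
    intro P hP
    have hbddA : BddAbove (Set.range fun Q => ⨆ _ : Q ∈ K, ∫ ω, ∏ i ∈ I, f i (X i ω) ∂Q) := by
      refine ⟨max Cg 0, ?_⟩
      rintro y ⟨Q, rfl⟩
      dsimp only
      by_cases hQ : Q ∈ K
      · rw [ciSup_pos hQ]
        haveI := hKp Q hQ
        refine le_trans ?_ (le_max_left _ _)
        calc ∫ ω, ∏ i ∈ I, f i (X i ω) ∂Q ≤ ∫ _ω, Cg ∂Q := by
              apply integral_mono ?_ (integrable_const _) ?_
              · have := hintS Q (hKp Q hQ)
                apply this.congr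
                exact Filter.Eventually.of_forall fun ω => (hprod ω).symm
              · intro ω
                show ∏ i ∈ I, f i (X i ω) ≤ Cg
                rw [hprod ω]
                exact hprodle ω
          _ = Cg := by simp
      · haveI : IsEmpty (Q ∈ K) := ⟨hQ⟩
        rw [Real.iSup_of_isEmpty]
        exact le_max_right _ _
    calc ∫ ω, ∏ i ∈ I, f i (X i ω) ∂P = ⨆ _ : P ∈ K, ∫ ω, ∏ i ∈ I, f i (X i ω) ∂P :=
          (ciSup_pos (f := fun _ : P ∈ K => ∫ ω, ∏ i ∈ I, f i (X i ω) ∂P) hP).symm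
      _ ≤ _ := le_ciSup hbddA P
  -- step 3 : bound on each factor
  have step3 : ∀ i ∈ I, (⨆ P ∈ K, ∫ ω, f i (X i ω) ∂P) ≤
      Real.exp (l ^ 2 * B i ^ 2 / 8) := by
    intro i hi
    apply Real.iSup_le _ (exp_nonneg _)
    intro Q
    apply Real.iSup_le _ (exp_nonneg _)
    intro hQ
    haveI := hKp Q hQ
    set μQ := ∫ ω', X i ω' ∂Q with hμQ
    have hsplit : ∀ ω, f i (X i ω) =
        Real.exp (-l * (μQ - m i)) * Real.exp ((-l) * (X i ω - μQ)) := by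
      intro ω
      rw [keyf i hi ω, ← Real.exp_add]
      ring_nf
    have h1 : ∫ ω, f i (X i ω) ∂Q =
        Real.exp (-l * (μQ - m i)) * ∫ ω, Real.exp ((-l) * (X i ω - μQ)) ∂Q := by
      rw [← integral_const_mul]
      exact integral_congr_ae (Filter.Eventually.of_forall hsplit)
    have h2 : Real.exp (-l * (μQ - m i)) ≤ 1 := by
      rw [Real.exp_le_one_iff]
      have := hmle Q hQ i hi
      nlinarith
    have h3 : ∫ ω, Real.exp ((-l) * (X i ω - μQ)) ∂Q ≤
        Real.exp ((-l) ^ 2 * (B i) ^ 2 / 8) := by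
      have hb : ∀ ω, X i ω ∈ Set.Icc (c i) (c i + B i) := fun ω =>
        ⟨hcle i hi ω, hleb i hi ω⟩
      have := hoeffding_lem Q (hmeas i) (by linarith [hBnn i hi] : c i ≤ c i + B i) hb (-l)
      simpa using this
    have h4 : (0:ℝ) ≤ ∫ ω, Real.exp ((-l) * (X i ω - μQ)) ∂Q :=
      integral_nonneg fun ω => exp_nonneg _
    calc ∫ ω, f i (X i ω) ∂Q
        = Real.exp (-l * (μQ - m i)) * ∫ ω, Real.exp ((-l) * (X i ω - μQ)) ∂Q := h1
      _ ≤ 1 * Real.exp ((-l) ^ 2 * (B i) ^ 2 / 8) := by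
          apply mul_le_mul h2 h3 h4 zero_le_one
      _ = Real.exp (l ^ 2 * B i ^ 2 / 8) := by rw [one_mul]; ring_nf
  -- assemble
  apply Real.iSup_le _ (exp_nonneg _)
  intro P
  apply Real.iSup_le _ (exp_nonneg _)
  intro hP
  have hTnn : ∀ i ∈ I, 0 ≤ ⨆ P ∈ K, ∫ ω, f i (X i ω) ∂P := fun i _ =>
    Real.iSup_nonneg fun Q => Real.iSup_nonneg fun _ =>
      integral_nonneg fun ω => exp_nonneg _
  have hfinal : ∏ i ∈ I, (⨆ P ∈ K, ∫ ω, f i (X i ω) ∂P) ≤ Real.exp (l ^ 2 * γ / 8) := by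
    calc ∏ i ∈ I, (⨆ P ∈ K, ∫ ω, f i (X i ω) ∂P)
        ≤ ∏ i ∈ I, Real.exp (l ^ 2 * B i ^ 2 / 8) :=
          Finset.prod_le_prod hTnn step3
      _ = Real.exp (∑ i ∈ I, l ^ 2 * B i ^ 2 / 8) := (Real.exp_sum _ _).symm
      _ = Real.exp (l ^ 2 * γ / 8) := by
          congr 1
          rw [hγ, Finset.mul_sum, Finset.sum_div]
  have hsupfact : (⨆ P ∈ K, ∫ ω, ∏ i ∈ I, f i (X i ω) ∂P) ≤
      ∏ i ∈ I, ⨆ P ∈ K, ∫ ω, f i (X i ω) ∂P := hfact f hfnn hfbd hfmeas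
  calc (P {ω | ∑ i ∈ I, (X i ω - m i) ≤ -ε}).toReal
      = (P {ω | S ω ≤ -ε}).toReal := rfl
    _ ≤ Real.exp (-(l * ε)) * ∫ ω, ∏ i ∈ I, f i (X i ω) ∂P := step1 P hP
    _ ≤ Real.exp (-(l * ε)) * (⨆ Q ∈ K, ∫ ω, ∏ i ∈ I, f i (X i ω) ∂Q) := by
        apply mul_le_mul_of_nonneg_left (hintProd P hP) (exp_nonneg _)
    _ ≤ Real.exp (-(l * ε)) * ∏ i ∈ I, (⨆ P ∈ K, ∫ ω, f i (X i ω) ∂P) := by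
        apply mul_le_mul_of_nonneg_left hsupfact (exp_nonneg _)
    _ ≤ Real.exp (-(l * ε)) * Real.exp (l ^ 2 * γ / 8) := by
        apply mul_le_mul_of_nonneg_left hfinal (exp_nonneg _)
    _ = Real.exp (-(l * ε) + l ^ 2 * γ / 8) := (Real.exp_add _ _).symm
    _ = Real.exp (-2 * ε ^ 2 / γ) := by
        congr 1
        rw [hl]
        field_simp
        ring
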